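/- Let F : ℝⁿ ⇉ ℝⁿ be locally bounded with closed graph and g : ℝⁿ → ℝ be C² with locally Lipschitz Hessian near x̄. If there exists r > 0 such that ⟨∇g(x), u⟩ ≤ 0 for all x ∈ B_r(x̄) and u ∈ F(x), and sup_{u ∈ F(x̄)} ⟨∇²g(x̄)u, u⟩ < 0, then there exist ᾱ, ρ, ω > 0 such that g(x + αu) − g(x) ≤ −ωα² for all α ∈ (0, ᾱ], x ∈ B_ρ(x̄), u ∈ F(x). -/

import Mathlib

open Set Metric
open InnerProductSpace



lemma usc_aux {n : ℕ} (F : EuclideanSpace ℝ (Fin n) → Set (EuclideanSpace ℝ (Fin n)))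
    (xb : EuclideanSpace ℝ (Fin n))
    (hgraph : IsClosed {p : EuclideanSpace ℝ (Fin n) × EuclideanSpace ℝ (Fin n) | p.2 ∈ F p.1})
    (q : EuclideanSpace ℝ (Fin n) → ℝ) (hq : Continuous q) (m' : ℝ)
    (hso : ∀ u ∈ F xb, q u < m')
    (δ₀ M : ℝ) (hδ₀ : 0 < δ₀)
    (hM : ∀ x ∈ ball xb δ₀, ∀ u ∈ F x, ‖u‖ ≤ M) :
    ∃ δ₁ > 0, δ₁ < δ₀ ∧ ∀ x ∈ closedBall xb δ₁, ∀ u ∈ F x, q u < m' := by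
  by_contra h
  push_neg at h
  set d : ℕ → ℝ := fun k => min (δ₀/2) (1/(k+1)) with hd
  have hdpos : ∀ k, 0 < d k := fun k => lt_min (by linarith) (by positivity)
  have hdlt : ∀ k, d k < δ₀ := fun k => lt_of_le_of_lt (min_le_left _ _) (by linarith)
  set C : ℕ → Set (EuclideanSpace ℝ (Fin n) × EuclideanSpace ℝ (Fin n)) :=
    fun k => (closedBall xb (d k) ×ˢ closedBall 0 M) ∩
      ({p | p.2 ∈ F p.1} ∩ {p | m' ≤ q p.2}) with hC
  have hmono : ∀ i j, i ≤ j → C j ⊆ C i := by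
    intro i j hij
    apply Set.inter_subset_inter_left
    apply Set.prod_mono_left
    apply closedBall_subset_closedBall
    exact min_le_min le_rfl (by
      apply one_div_le_one_div_of_le (by positivity)
      push_cast
      have : (i:ℝ) ≤ j := Nat.cast_le.2 hij
      linarith)
  have hne : ∀ k, (C k).Nonempty := by
    intro k
    obtain ⟨x, hx, u, hu, hqu⟩ := h (d k) (hdpos k) (hdlt k)
    refine ⟨(x, u), ⟨⟨hx, ?_⟩, hu, hqu⟩⟩
    rw [mem_closedBall_zero_iff]
    exact hM x (lt_of_le_of_lt (mem_closedBall.1 hx) (hdlt k)) u hu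
  have hcl : ∀ k, IsClosed (C k) :=
    fun k => ((IsClosed.prod isClosed_closedBall isClosed_closedBall).inter
      (hgraph.inter (isClosed_le continuous_const (hq.comp continuous_snd))))
  have hcpt : ∀ k, IsCompact (C k) :=
    fun k => ((isCompact_closedBall _ _).prod (isCompact_closedBall _ _)).inter_right
      (hgraph.inter (isClosed_le continuous_const (hq.comp continuous_snd)))
  have hdir : Directed (· ⊇ ·) C := fun i j =>
    ⟨max i j, hmono i _ (le_max_left _ _), hmono j _ (le_max_right _ _)⟩
  obtain ⟨p, hp⟩ := IsCompact.nonempty_iInter_of_directed_nonempty_isCompact_isClosed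
    C hdir hne hcpt hcl
  have hp1 : p.1 = xb := by
    have hdist : dist p.1 xb ≤ 0 := by
      by_contra hdist
      push_neg at hdist
      obtain ⟨k, hk⟩ := exists_nat_one_div_lt hdist
      have := ((Set.mem_iInter.1 hp k).1.1 : p.1 ∈ closedBall xb (d k))
      have h2 : d k ≤ 1/(k+1) := min_le_right _ _
      rw [mem_closedBall] at this
      push_cast at hk ⊢
      linarith
    have := dist_nonneg (x := p.1) (y := xb)
    exact dist_le_zero.1 hdist
  have h1 := (Set.mem_iInter.1 hp 0).2.1
  have h2 := (Set.mem_iInter.1 hp 0).2.2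
  rw [Set.mem_setOf_eq, hp1] at h1
  exact absurd (hso _ h1) (not_lt.2 h2)


lemma taylor_aux (φ φ' : ℝ → ℝ) (c a : ℝ) (ha : 0 ≤ a)
    (hφ : ∀ t ∈ Set.Icc 0 a, HasDerivAt φ (φ' t) t)
    (hφ' : ∀ t ∈ Set.Icc 0 a, ∃ d, HasDerivAt φ' d t ∧ d ≤ c)
    (h0 : φ' 0 ≤ 0) :
    φ a - φ 0 ≤ c / 2 * a ^ 2 := by
  have hIcc : interior (Set.Icc (0:ℝ) a) ⊆ Set.Icc 0 a := interior_subset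
  -- step 1 : φ' t ≤ c * t on Icc 0 a
  have step1 : ∀ t ∈ Set.Icc 0 a, φ' t ≤ c * t := by
    have hanti : AntitoneOn (fun t => φ' t - c * t) (Set.Icc 0 a) := by
      apply antitoneOn_of_deriv_nonpos (convex_Icc 0 a)
      · exact ContinuousOn.sub (fun t ht => ((hφ' t ht).choose_spec.1.continuousAt).continuousWithinAt)
          (Continuous.continuousOn (by continuity))
      · intro t ht
        obtain ⟨d, hd, _⟩ := hφ' t (hIcc ht)
        exact (hd.sub ((hasDerivAt_id t).const_mul c)).differentiableAt.differentiableWithinAt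
      · intro t ht
        obtain ⟨d, hd, hdc⟩ := hφ' t (hIcc ht)
        have : HasDerivAt (fun t => φ' t - c * t) (d - c) t := by
          simpa using hd.fun_sub ((hasDerivAt_id t).const_mul c)
        rw [this.deriv]
        linarith
    intro t ht
    have := hanti (Set.left_mem_Icc.2 ha) ht ht.1
    simp at this
    linarith
  -- step 2
  have hanti2 : AntitoneOn (fun t => φ t - c / 2 * t ^ 2) (Set.Icc 0 a) := by
    apply antitoneOn_of_deriv_nonpos (convex_Icc 0 a)
    · exact ContinuousOn.sub (fun t ht => ((hφ t ht).continuousAt).continuousWithinAt)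
        (Continuous.continuousOn (by continuity))
    · intro t ht
      exact ((hφ t (hIcc ht)).sub (((hasDerivAt_pow 2 t).const_mul (c/2)))).differentiableAt.differentiableWithinAt
    · intro t ht
      have ht' := hIcc ht
      have hD : HasDerivAt (fun t => φ t - c / 2 * t ^ 2) (φ' t - c * t) t := by
        have : HasDerivAt (fun t => φ t - c / 2 * t ^ 2) (φ' t - c / 2 * (((2:ℕ):ℝ) * t ^ (2 - 1))) t :=
          (hφ t ht').fun_sub ((hasDerivAt_pow 2 t).const_mul (c/2))
        convert this using 1
        rw [show (2:ℕ) - 1 = 1 from rfl]; push_cast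
        ring
      rw [hD.deriv]
      have := step1 t ht'
      linarith
  have := hanti2 (Set.left_mem_Icc.2 ha) (Set.right_mem_Icc.2 ha) ha
  simp at this
  linarith

lemma grad_inner_eq {n : ℕ} (g : EuclideanSpace ℝ (Fin n) → ℝ) (y u : EuclideanSpace ℝ (Fin n)) :
    (inner ℝ (gradient g y) u : ℝ) = fderiv ℝ g y u := by
  rw [gradient, toDual_symm_apply]



/-- Second-order sufficient condition for a 2-d-Lyapunov decrease: if `F` is
locally bounded with closed graph, `g` is `C²` with locally Lipschitz Hessian
near `xb`, `⟪∇g(x), u⟫ ≤ 0` for all `x ∈ B_r(xb)` and `u ∈ F x`, and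
`sup_{u ∈ F xb} ⟪∇²g(xb) u, u⟫ < 0`, then there are `ᾱ, ρ, ω > 0` with
`g (x + α • u) - g x ≤ -ω * α ^ 2` for all `α ∈ (0, ᾱ]`, `x ∈ B_ρ(xb)`,
`u ∈ F x`. -/
theorem stmt_3 {n : ℕ}
    (F : EuclideanSpace ℝ (Fin n) → Set (EuclideanSpace ℝ (Fin n)))
    (g : EuclideanSpace ℝ (Fin n) → ℝ) (xb : EuclideanSpace ℝ (Fin n))
    (hbound : ∀ y, ∃ U ∈ nhds y, Bornology.IsBounded (⋃ z ∈ U, F z))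
    (hgraph : IsClosed {p : EuclideanSpace ℝ (Fin n) × EuclideanSpace ℝ (Fin n) | p.2 ∈ F p.1})
    (hC22 : ∃ ε > (0:ℝ), ContDiffOn ℝ 2 g (ball xb ε) ∧
      ∃ L : NNReal,
        LipschitzOnWith L (fun y => fderiv ℝ (gradient g) y) (ball xb ε))
    (hne : (F xb).Nonempty)
    (hfirst : ∃ r > (0:ℝ), ∀ x ∈ closedBall xb r, ∀ u ∈ F x,
      inner ℝ (gradient g x) u ≤ (0:ℝ))
    (hsecond : ∃ m < (0:ℝ), ∀ u ∈ F xb,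
      inner ℝ (fderiv ℝ (gradient g) xb u) u ≤ m) :
    ∃ ᾱ > (0:ℝ), ∃ ρ > (0:ℝ), ∃ ω > (0:ℝ),
      ∀ α ∈ Set.Ioc (0:ℝ) ᾱ, ∀ x ∈ closedBall xb ρ, ∀ u ∈ F x,
        g (x + α • u) - g x ≤ -ω * α ^ 2 := by
  
  classical
  obtain ⟨ε, hε, hg2, L, hLip⟩ := hC22
  obtain ⟨r, hr, hfo⟩ := hfirst
  obtain ⟨m, hm, hso⟩ := hsecond
  obtain ⟨U, hU, hUb⟩ := hbound xb
  obtain ⟨δ', hδ'pos, hδ'U⟩ := Metric.mem_nhds_iff.mp hU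
  obtain ⟨M₀, hM₀⟩ := isBounded_iff_forall_norm_le.1 hUb
  set M : ℝ := max M₀ 1 with hMdef
  have hM1 : (1:ℝ) ≤ M := le_max_right _ _
  have hMpos : (0:ℝ) < M := by linarith
  have hMb : ∀ x ∈ ball xb δ', ∀ u ∈ F x, ‖u‖ ≤ M := by
    intro x hx u hu
    exact le_trans (hM₀ u (Set.mem_biUnion (hδ'U hx) hu)) (le_max_left _ _)
  set H := fderiv ℝ (gradient g) xb with hH
  set q : EuclideanSpace ℝ (Fin n) → ℝ := fun u => inner ℝ (H u) u with hq
  have hqc : Continuous q := (H.continuous.inner continuous_id)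
  have hso' : ∀ u ∈ F xb, q u < m/2 := fun u hu => lt_of_le_of_lt (hso u hu) (by linarith)
  obtain ⟨δ₁, hδ₁pos, hδ₁lt, husc⟩ := usc_aux F xb hgraph q hqc (m/2) hso' δ' M hδ'pos hMb
  -- constants
  set κ : ℝ := min δ₁ (min r (min (ε/2) ((-m)/(4*(L*M^2+1))))) with hκdef
  have hLM : (0:ℝ) < L*M^2+1 := by positivity
  have hκpos : 0 < κ := by
    refine lt_min hδ₁pos (lt_min hr (lt_min (by linarith) ?_))
    have : (0:ℝ) < -m := by linarith
    positivity
  have hκδ₁ : κ ≤ δ₁ := min_le_left _ _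
  have hκr : κ ≤ r := le_trans (min_le_right _ _) (min_le_left _ _)
  have hκε : κ ≤ ε/2 := le_trans (min_le_right _ _) (le_trans (min_le_right _ _) (min_le_left _ _))
  have hκm : κ ≤ (-m)/(4*(L*M^2+1)) :=
    le_trans (min_le_right _ _) (le_trans (min_le_right _ _) (min_le_right _ _))
  have hLκM : (L:ℝ) * κ * M^2 ≤ -m/4 := by
    have h2 : κ * (4*((L:ℝ)*M^2+1)) ≤ -m := (le_div_iff₀ (by positivity)).1 hκm
    nlinarith [hκpos.le]
  refine ⟨κ/(2*M), by positivity, κ/2, by positivity, -m/8, by linarith, ?_⟩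
  intro α hα x hx u hu
  set ᾱ := κ/(2*M)
  have hxδ₁ : x ∈ closedBall xb δ₁ := by
    rw [mem_closedBall] at hx ⊢; linarith [hκδ₁]
  have hxδ' : x ∈ ball xb δ' := by
    rw [mem_closedBall] at hx; rw [mem_ball]; linarith [hκδ₁, hδ₁lt]
  have hxr : x ∈ closedBall xb r := by
    rw [mem_closedBall] at hx ⊢; linarith [hκr]
  have huM : ‖u‖ ≤ M := hMb x hxδ' u hu
  have hqu : q u < m/2 := husc x hxδ₁ u hu
  -- points on the segment stay in ball xb ε and within κ of xb
  have hseg : ∀ t ∈ Set.Icc (0:ℝ) α, x + t • u ∈ closedBall xb κ := by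
    intro t ht
    rw [mem_closedBall]
    have h1 : dist (x + t • u) xb ≤ ‖t • u‖ + dist x xb := by
      calc dist (x + t • u) xb ≤ dist (x + t • u) x + dist x xb := dist_triangle _ _ _
      _ = ‖t • u‖ + dist x xb := by rw [dist_eq_norm]; simp
    have h2 : ‖t • u‖ ≤ ᾱ * M := by
      rw [norm_smul, Real.norm_eq_abs, abs_of_nonneg ht.1]
      have := ht.2
      have hαᾱ := hα.2
      apply mul_le_mul (by linarith) huM (norm_nonneg _) (by positivity)
    have h3 : ᾱ * M = κ/2 := by
      show κ/(2*M) * M = κ/2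
      field_simp
    rw [mem_closedBall] at hx
    linarith
  have hsegε : ∀ t ∈ Set.Icc (0:ℝ) α, x + t • u ∈ ball xb ε := by
    intro t ht
    have := hseg t ht
    rw [mem_closedBall] at this; rw [mem_ball]; linarith
  -- differentiability facts
  have hf' : ContDiffOn ℝ 1 (fderiv ℝ g) (ball xb ε) :=
    hg2.fderiv_of_isOpen isOpen_ball (by norm_num)
  have hGd : ∀ y ∈ ball xb ε, DifferentiableAt ℝ (gradient g) y := by
    intro y hy
    have h1 : DifferentiableAt ℝ (fderiv ℝ g) y :=
      (hf'.differentiableOn (by norm_num)).differentiableAt (isOpen_ball.mem_nhds hy)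
    have h2 : DifferentiableAt ℝ
        (fun z => (toDual ℝ (EuclideanSpace ℝ (Fin n))).symm.toContinuousLinearEquiv
          (fderiv ℝ g z)) y :=
      ((toDual ℝ (EuclideanSpace ℝ (Fin n))).symm.toContinuousLinearEquiv.differentiableAt).comp y h1
    convert h2 using 1
    funext z
    rfl
  have hgdiff : ∀ y ∈ ball xb ε, DifferentiableAt ℝ g y := by
    intro y hy
    exact (hg2.differentiableOn (by norm_num)).differentiableAt (isOpen_ball.mem_nhds hy)
  set φ : ℝ → ℝ := fun t => g (x + t • u) with hφdef
  set φ' : ℝ → ℝ := fun t => inner ℝ (gradient g (x + t • u)) u with hφ'def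
  have hline : ∀ t : ℝ, HasDerivAt (fun s : ℝ => x + s • u) u t := by
    intro t
    simpa using ((hasDerivAt_id t).smul_const u).const_add x
  have hφd : ∀ t ∈ Set.Icc (0:ℝ) α, HasDerivAt φ (φ' t) t := by
    intro t ht
    have hy := hsegε t ht
    have h1 : HasDerivAt (fun s => g (x + s • u)) (fderiv ℝ g (x + t • u) u) t :=
      ((hgdiff _ hy).hasFDerivAt).comp_hasDerivAt t (hline t)
    have h2 : φ' t = fderiv ℝ g (x + t • u) u := grad_inner_eq g _ u
    rw [h2]; exact h1
  have hφ'd : ∀ t ∈ Set.Icc (0:ℝ) α, ∃ d, HasDerivAt φ' d t ∧ d ≤ m/4 := by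
    intro t ht
    have hy := hsegε t ht
    set y := x + t • u with hydef
    refine ⟨inner ℝ (fderiv ℝ (gradient g) y u) u, ?_, ?_⟩
    · have h1 : HasDerivAt (fun s => gradient g (x + s • u)) (fderiv ℝ (gradient g) y u) t :=
        by have := ((hGd y hy).hasFDerivAt).comp_hasDerivAt t (hline t); exact this
      have h2 := HasDerivAt.inner ℝ h1 (hasDerivAt_const t u)
      simp only [inner_zero_right, add_zero, zero_add] at h2
      exact h2
    · -- bound
      have hLip' : ‖fderiv ℝ (gradient g) y - H‖ ≤ L * κ := by
        have := hLip.dist_le_mul y hy xb (mem_ball_self (by linarith))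
        rw [dist_eq_norm] at this
        have hd : dist y xb ≤ κ := mem_closedBall.1 (hseg t ht)
        calc ‖fderiv ℝ (gradient g) y - H‖ ≤ L * dist y xb := this
        _ ≤ L * κ := by
            apply mul_le_mul_of_nonneg_left hd (by positivity)
      have hsplit : (inner ℝ (fderiv ℝ (gradient g) y u) u : ℝ)
          = inner ℝ ((fderiv ℝ (gradient g) y - H) u) u + q u := by
        simp [hq, ContinuousLinearMap.sub_apply, inner_sub_left]
      have hb1 : (inner ℝ ((fderiv ℝ (gradient g) y - H) u) u : ℝ) ≤ L * κ * M^2 := by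
        calc (inner ℝ ((fderiv ℝ (gradient g) y - H) u) u : ℝ)
            ≤ ‖(fderiv ℝ (gradient g) y - H) u‖ * ‖u‖ := real_inner_le_norm _ _
          _ ≤ (‖fderiv ℝ (gradient g) y - H‖ * ‖u‖) * ‖u‖ := by
              apply mul_le_mul_of_nonneg_right ((fderiv ℝ (gradient g) y - H).le_opNorm u) (norm_nonneg _)
          _ ≤ ((L * κ) * M) * M := by
              apply mul_le_mul _ huM (norm_nonneg _) (by positivity)
              apply mul_le_mul hLip' huM (norm_nonneg _) (by positivity)
          _ = L * κ * M^2 := by ring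
      rw [hsplit]
      have : (L:ℝ) * κ * M^2 ≤ -m/4 := hLκM
      linarith
  have hφ'0 : φ' 0 ≤ 0 := by
    have : φ' 0 = inner ℝ (gradient g x) u := by simp [hφ'def]
    rw [this]
    exact hfo x hxr u hu
  have := taylor_aux φ φ' (m/4) α (le_of_lt hα.1) hφd hφ'd hφ'0
  have hφ0 : φ 0 = g x := by simp [hφdef]
  have hφα : φ α = g (x + α • u) := rfl
  rw [hφ0, hφα] at this
  have : g (x + α • u) - g x ≤ m/4/2 * α^2 := this
  nlinarith [sq_nonneg α]
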